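/- For every m ∈ ℝ and every integer l ≥ 2, the l-th Hermite coefficient of u ↦ |u − m| satisfies a_l(m) = √(2/π) H_{l−2}(m) e^{−m²/2} / l!, that is, ∫_ℝ |u − m| H_l(u) φ(u) du = √(2/π) H_{l−2}(m) e^{−m²/2}. -/

import Mathlib

open MeasureTheory ProbabilityTheory Set Filter Topology Real
open scoped ENNReal NNReal

/-- The standard normal density `φ(u) = (2π)^(-1/2) e^(-u²/2)`. -/
noncomputable def stdNormalPDF (u : ℝ) : ℝ := Real.exp (-u ^ 2 / 2) / Real.sqrt (2 * Real.pi)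

/-- The standard normal distribution function `Φ(m) = ∫_{-∞}^m φ(u) du`. -/
noncomputable def stdNormalCDF (m : ℝ) : ℝ := ∫ u in Set.Iic m, stdNormalPDF u

/-- The probabilists' Hermite polynomial `Hₙ`, evaluated at a real number. -/
noncomputable def hermiteR (n : ℕ) (x : ℝ) : ℝ := Polynomial.aeval x (Polynomial.hermite n)

/-- The Hermite coefficients `aₖ(m) = (1/k!) ∫ |u − m| Hₖ(u) φ(u) du` of `u ↦ |u − m|`. -/
noncomputable def hermiteCoeff (k : ℕ) (m : ℝ) : ℝ :=
  (1 / (k.factorial : ℝ)) * ∫ u : ℝ, |u - m| * hermiteR k u * stdNormalPDF u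

namespace HermiteAux

open Polynomial

noncomputable def pR (k : ℕ) : ℝ[X] := (Polynomial.hermite k).map (Int.castRingHom ℝ)

lemma hermiteR_eq (k : ℕ) (x : ℝ) : hermiteR k x = (pR k).eval x := by
  rw [hermiteR, pR, aeval_def, eval₂_eq_eval_map, algebraMap_int_eq]

lemma continuous_hermiteR (k : ℕ) : Continuous fun x : ℝ => hermiteR k x :=
  Polynomial.continuous_aeval _

lemma pow_le_factorial_mul_exp (n : ℕ) {t : ℝ} (ht : 0 ≤ t) :
    t ^ n ≤ (n.factorial : ℝ) * Real.exp t := by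
  have h1 : t ^ n / (n.factorial : ℝ) ≤ ∑ i ∈ Finset.range (n + 1), t ^ i / (i.factorial : ℝ) :=
    Finset.single_le_sum (f := fun i => t ^ i / (i.factorial : ℝ))
      (fun i _ => by positivity) (Finset.self_mem_range_succ n)
  have h2 : ∑ i ∈ Finset.range (n + 1), t ^ i / (i.factorial : ℝ) ≤ Real.exp t :=
    Real.sum_le_exp_of_nonneg ht (n + 1)
  have h3 : t ^ n / (n.factorial : ℝ) ≤ Real.exp t := h1.trans h2
  have h4 : (0:ℝ) < (n.factorial : ℝ) := by positivity
  calc t ^ n = (n.factorial : ℝ) * (t ^ n / (n.factorial : ℝ)) := by field_simp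
    _ ≤ (n.factorial : ℝ) * Real.exp t := by
        exact mul_le_mul_of_nonneg_left h3 h4.le

lemma integrable_pow_gauss (n : ℕ) :
    Integrable fun x : ℝ => x ^ n * Real.exp (-x ^ 2 / 2) := by
  have i1 : Integrable fun x : ℝ => Real.exp (-x ^ 2 / 2) := by
    have := integrable_exp_neg_mul_sq (b := (1:ℝ)/2) (by norm_num)
    refine this.congr (Eventually.of_forall fun x => ?_)
    ring_nf
  have i2 : Integrable fun x : ℝ => Real.exp (-x ^ 2 / 4) := by
    have := integrable_exp_neg_mul_sq (b := (1:ℝ)/4) (by norm_num)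
    refine this.congr (Eventually.of_forall fun x => ?_)
    ring_nf
  have hg : Integrable fun x : ℝ =>
      Real.exp (-x ^ 2 / 2) + ((4:ℝ) ^ n * (n.factorial : ℝ)) * Real.exp (-x ^ 2 / 4) :=
    i1.add (i2.const_mul _)
  refine hg.mono' ?_ (Eventually.of_forall fun x => ?_)
  · exact ((continuous_pow n).mul (((continuous_pow 2).neg.div_const 2).rexp)).aestronglyMeasurable
  · rw [Real.norm_eq_abs, abs_mul, abs_pow, abs_of_pos (Real.exp_pos _)]
    have hkey : |x| ^ n * Real.exp (-x ^ 2 / 2)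
        ≤ Real.exp (-x ^ 2 / 2) + ((4:ℝ) ^ n * (n.factorial : ℝ)) * Real.exp (-x ^ 2 / 4) := by
      rcases le_or_gt (|x|) 1 with h | h
      · have h1 : |x| ^ n ≤ 1 := pow_le_one₀ (abs_nonneg x) h
        have h2 : |x| ^ n * Real.exp (-x ^ 2 / 2) ≤ Real.exp (-x ^ 2 / 2) := by
          nlinarith [Real.exp_pos (-x ^ 2 / 2), pow_nonneg (abs_nonneg x) n]
        have h3 : (0:ℝ) ≤ ((4:ℝ) ^ n * (n.factorial : ℝ)) * Real.exp (-x ^ 2 / 4) := by positivity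
        linarith
      · have h1 : |x| ^ n ≤ |x| ^ (2 * n) := pow_le_pow_right₀ h.le (by omega)
        have h2 : |x| ^ (2 * n) = (x ^ 2) ^ n := by
          rw [pow_mul, sq_abs]
        have h3 : (x ^ 2 / 4) ^ n ≤ (n.factorial : ℝ) * Real.exp (x ^ 2 / 4) :=
          pow_le_factorial_mul_exp n (by positivity)
        have h4 : (x ^ 2) ^ n ≤ (4:ℝ) ^ n * ((n.factorial : ℝ) * Real.exp (x ^ 2 / 4)) := by
          calc (x ^ 2) ^ n = (4:ℝ) ^ n * (x ^ 2 / 4) ^ n := by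
                rw [← mul_pow]; ring_nf
            _ ≤ (4:ℝ) ^ n * ((n.factorial : ℝ) * Real.exp (x ^ 2 / 4)) := by
                exact mul_le_mul_of_nonneg_left h3 (by positivity)
        have h5 : |x| ^ n * Real.exp (-x ^ 2 / 2)
            ≤ ((4:ℝ) ^ n * ((n.factorial : ℝ) * Real.exp (x ^ 2 / 4))) * Real.exp (-x ^ 2 / 2) := by
          have := (h1.trans (le_of_eq h2)).trans h4
          nlinarith [Real.exp_pos (-x ^ 2 / 2), pow_nonneg (abs_nonneg x) n]
        have h6 : ((4:ℝ) ^ n * ((n.factorial : ℝ) * Real.exp (x ^ 2 / 4))) * Real.exp (-x ^ 2 / 2)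
            = ((4:ℝ) ^ n * (n.factorial : ℝ)) * Real.exp (-x ^ 2 / 4) := by
          rw [mul_assoc, mul_assoc, ← Real.exp_add]
          ring_nf
        have h7 : (0:ℝ) ≤ Real.exp (-x ^ 2 / 2) := (Real.exp_pos _).le
        linarith [h5, h6.le, h6.ge]
    exact hkey
  done

lemma integrable_poly_gauss (p : ℝ[X]) :
    Integrable fun x : ℝ => p.eval x * Real.exp (-x ^ 2 / 2) := by
  have hfun : (fun x : ℝ => p.eval x * Real.exp (-x ^ 2 / 2))
      = fun x => ∑ i ∈ Finset.range (p.natDegree + 1),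
          p.coeff i * (x ^ i * Real.exp (-x ^ 2 / 2)) := by
    funext x
    rw [Polynomial.eval_eq_sum_range, Finset.sum_mul]
    exact Finset.sum_congr rfl fun i _ => by ring
  rw [hfun]
  exact integrable_finset_sum _ fun i _ => (integrable_pow_gauss i).const_mul _

lemma tendsto_poly_gauss_atTop (p : ℝ[X]) :
    Tendsto (fun x : ℝ => p.eval x * Real.exp (-x ^ 2 / 2)) atTop (𝓝 0) := by
  have h1 := p.tendsto_div_exp_atTop
  have h3 : Tendsto (fun x : ℝ => x - x ^ 2 / 2) atTop atBot := by
    apply tendsto_atBot_mono' atTop ?_ tendsto_neg_atTop_atBot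
    filter_upwards [eventually_ge_atTop (4:ℝ)] with x hx
    nlinarith
  have h2 : Tendsto (fun x : ℝ => Real.exp (x - x ^ 2 / 2)) atTop (𝓝 0) :=
    Real.tendsto_exp_atBot.comp h3
  have h := h1.mul h2
  rw [zero_mul] at h
  refine h.congr fun x => ?_
  rw [show x - x ^ 2 / 2 = x + -x ^ 2 / 2 by ring, Real.exp_add]
  field_simp
  try ring

lemma tendsto_poly_gauss_atBot (p : ℝ[X]) :
    Tendsto (fun x : ℝ => p.eval x * Real.exp (-x ^ 2 / 2)) atBot (𝓝 0) := by
  have h := (tendsto_poly_gauss_atTop (p.comp (-X))).comp tendsto_neg_atBot_atTop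
  refine h.congr fun x => ?_
  simp [Function.comp, Polynomial.eval_comp, neg_sq]

lemma hasDerivAt_hermiteR (k : ℕ) (x : ℝ) :
    HasDerivAt (fun y : ℝ => hermiteR k y) (x * hermiteR k x - hermiteR (k + 1) x) x := by
  have h := (Polynomial.hermite k).hasDerivAt_aeval (𝕜 := ℝ) x
  have hd : derivative (Polynomial.hermite k) = X * Polynomial.hermite k - Polynomial.hermite (k + 1) := by
    rw [Polynomial.hermite_succ]; ring
  rw [hd] at h
  simpa [hermiteR] using h

lemma hasDerivAt_G (k : ℕ) (x : ℝ) :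
    HasDerivAt (fun y : ℝ => hermiteR k y * Real.exp (-y ^ 2 / 2))
      (-(hermiteR (k + 1) x * Real.exp (-x ^ 2 / 2))) x := by
  have hinner : HasDerivAt (fun y : ℝ => -y ^ 2 / 2) (-x) x := by
    have h := ((hasDerivAt_pow 2 x).neg.div_const 2)
    exact h.congr_deriv (by norm_num; ring)
  have hexp : HasDerivAt (fun y : ℝ => Real.exp (-y ^ 2 / 2))
      (Real.exp (-x ^ 2 / 2) * (-x)) x := hinner.exp
  have h := (hasDerivAt_hermiteR k x).mul hexp
  exact h.congr_deriv (by ring)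

lemma integral_Ioi_eq (m : ℝ) (n : ℕ) :
    ∫ x in Ioi m, (x - m) * hermiteR (n + 2) x * Real.exp (-x ^ 2 / 2)
      = hermiteR n m * Real.exp (-m ^ 2 / 2) := by
  have hderiv : ∀ x ∈ Ici m,
      HasDerivAt (fun y : ℝ => -((y - m) * (hermiteR (n + 1) y * Real.exp (-y ^ 2 / 2)))
          - hermiteR n y * Real.exp (-y ^ 2 / 2))
        ((x - m) * hermiteR (n + 2) x * Real.exp (-x ^ 2 / 2)) x := by
    intro x _
    have h1 := hasDerivAt_G (n + 1) x
    have h2 := hasDerivAt_G n x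
    have hlin : HasDerivAt (fun y : ℝ => y - m) 1 x := (hasDerivAt_id x).sub_const m
    have h := (hlin.mul h1).neg.sub h2
    exact h.congr_deriv (by ring)
  have hint : IntegrableOn
      (fun x => (x - m) * hermiteR (n + 2) x * Real.exp (-x ^ 2 / 2)) (Ioi m) := by
    apply Integrable.integrableOn
    have h := integrable_poly_gauss ((X - C m) * pR (n + 2))
    refine h.congr (Eventually.of_forall fun x => ?_)
    simp only [Polynomial.eval_mul, Polynomial.eval_sub, Polynomial.eval_X, Polynomial.eval_C,
      ← hermiteR_eq]
    try ring
  have htend : Tendsto (fun y : ℝ => -((y - m) * (hermiteR (n + 1) y * Real.exp (-y ^ 2 / 2)))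
      - hermiteR n y * Real.exp (-y ^ 2 / 2)) atTop (𝓝 0) := by
    have h := tendsto_poly_gauss_atTop (-((X - C m) * pR (n + 1)) - pR n)
    refine h.congr fun x => ?_
    simp only [Polynomial.eval_sub, Polynomial.eval_neg, Polynomial.eval_mul, Polynomial.eval_X,
      Polynomial.eval_C, ← hermiteR_eq]
    try ring
  have h := integral_Ioi_of_hasDerivAt_of_tendsto' hderiv hint htend
  rw [h]
  simp
  try ring

lemma integral_Iic_eq (m : ℝ) (n : ℕ) :
    ∫ x in Iic m, (m - x) * hermiteR (n + 2) x * Real.exp (-x ^ 2 / 2)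
      = hermiteR n m * Real.exp (-m ^ 2 / 2) := by
  have hderiv : ∀ x ∈ Iic m,
      HasDerivAt (fun y : ℝ => (y - m) * (hermiteR (n + 1) y * Real.exp (-y ^ 2 / 2))
          + hermiteR n y * Real.exp (-y ^ 2 / 2))
        ((m - x) * hermiteR (n + 2) x * Real.exp (-x ^ 2 / 2)) x := by
    intro x _
    have h1 := hasDerivAt_G (n + 1) x
    have h2 := hasDerivAt_G n x
    have hlin : HasDerivAt (fun y : ℝ => y - m) 1 x := (hasDerivAt_id x).sub_const m
    have h := (hlin.mul h1).add h2
    exact h.congr_deriv (by ring)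
  have hint : IntegrableOn
      (fun x => (m - x) * hermiteR (n + 2) x * Real.exp (-x ^ 2 / 2)) (Iic m) := by
    apply Integrable.integrableOn
    have h := integrable_poly_gauss ((C m - X) * pR (n + 2))
    refine h.congr (Eventually.of_forall fun x => ?_)
    simp only [Polynomial.eval_mul, Polynomial.eval_sub, Polynomial.eval_X, Polynomial.eval_C,
      ← hermiteR_eq]
    try ring
  have htend : Tendsto (fun y : ℝ => (y - m) * (hermiteR (n + 1) y * Real.exp (-y ^ 2 / 2))
      + hermiteR n y * Real.exp (-y ^ 2 / 2)) atBot (𝓝 0) := by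
    have h := tendsto_poly_gauss_atBot ((X - C m) * pR (n + 1) + pR n)
    refine h.congr fun x => ?_
    simp only [Polynomial.eval_add, Polynomial.eval_mul, Polynomial.eval_sub, Polynomial.eval_X,
      Polynomial.eval_C, ← hermiteR_eq]
    try ring
  have h := integral_Iic_of_hasDerivAt_of_tendsto' hderiv hint htend
  rw [h]
  simp
  try ring

lemma integrable_abs_hermite_gauss (m : ℝ) (k : ℕ) :
    Integrable fun u : ℝ => |u - m| * hermiteR k u * Real.exp (-u ^ 2 / 2) := by
  have hg : Integrable fun u : ℝ => (u - m) * hermiteR k u * Real.exp (-u ^ 2 / 2) := by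
    have h := integrable_poly_gauss ((X - C m) * pR k)
    refine h.congr (Eventually.of_forall fun x => ?_)
    simp only [Polynomial.eval_mul, Polynomial.eval_sub, Polynomial.eval_X, Polynomial.eval_C,
      ← hermiteR_eq]
    try ring
  refine hg.abs.mono' ?_ (Eventually.of_forall fun x => ?_)
  · exact (((continuous_id.sub continuous_const).abs.mul (continuous_hermiteR k)).mul
      (((continuous_pow 2).neg.div_const 2).rexp)).aestronglyMeasurable
  · rw [Real.norm_eq_abs]
    simp [abs_mul, abs_abs]

end HermiteAux

open HermiteAux Polynomial

/-- for `l ≥ 2`, `a_l(m) = √(2/π) H_{l−2}(m) e^{−m²/2} / l!`, i.e.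
`∫ |u − m| H_l(u) φ(u) du = √(2/π) H_{l−2}(m) e^{−m²/2}`. -/
theorem hermiteCoeff_ge_two (m : ℝ) (l : ℕ) (hl : 2 ≤ l) :
    hermiteCoeff l m
      = Real.sqrt (2 / Real.pi) * hermiteR (l - 2) m * Real.exp (-m ^ 2 / 2)
          / (l.factorial : ℝ) ∧
    (∫ u : ℝ, |u - m| * hermiteR l u * stdNormalPDF u)
      = Real.sqrt (2 / Real.pi) * hermiteR (l - 2) m * Real.exp (-m ^ 2 / 2) := by
  obtain ⟨n, rfl⟩ : ∃ n, l = n + 2 := ⟨l - 2, by omega⟩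
  have hsub : n + 2 - 2 = n := by omega
  rw [hsub]
  have habs := integrable_abs_hermite_gauss m (n + 2)
  have hmain : (∫ u : ℝ, |u - m| * hermiteR (n + 2) u * Real.exp (-u ^ 2 / 2))
      = 2 * (hermiteR n m * Real.exp (-m ^ 2 / 2)) := by
    rw [← intervalIntegral.integral_Iic_add_Ioi (b := m) habs.integrableOn habs.integrableOn]
    have h1 : (∫ u in Iic m, |u - m| * hermiteR (n + 2) u * Real.exp (-u ^ 2 / 2))
        = ∫ u in Iic m, (m - u) * hermiteR (n + 2) u * Real.exp (-u ^ 2 / 2) := by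
      apply setIntegral_congr_fun measurableSet_Iic
      intro x hx
      have hx' : x ≤ m := hx
      have habs' : |x - m| = m - x := by rw [abs_of_nonpos (by linarith)]; ring
      simp only [habs']
    have h2 : (∫ u in Ioi m, |u - m| * hermiteR (n + 2) u * Real.exp (-u ^ 2 / 2))
        = ∫ u in Ioi m, (u - m) * hermiteR (n + 2) u * Real.exp (-u ^ 2 / 2) := by
      apply setIntegral_congr_fun measurableSet_Ioi
      intro x hx
      have hx' : m < x := hx
      have habs' : |x - m| = x - m := abs_of_nonneg (by linarith)
      simp only [habs']
    rw [h1, h2, integral_Iic_eq, integral_Ioi_eq]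
    ring
  have hpi := Real.pi_pos
  have h2pi : (0:ℝ) < Real.sqrt (2 * Real.pi) := Real.sqrt_pos.2 (by positivity)
  have hs : Real.sqrt (2 / Real.pi) = 2 / Real.sqrt (2 * Real.pi) := by
    rw [eq_div_iff h2pi.ne', ← Real.sqrt_mul (by positivity),
      show 2 / Real.pi * (2 * Real.pi) = 2 ^ 2 by field_simp]
    exact Real.sqrt_sq (by norm_num)
  have hstd : (∫ u : ℝ, |u - m| * hermiteR (n + 2) u * stdNormalPDF u)
      = Real.sqrt (2 / Real.pi) * hermiteR n m * Real.exp (-m ^ 2 / 2) := by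
    have hrw : (fun u : ℝ => |u - m| * hermiteR (n + 2) u * stdNormalPDF u)
        = fun u : ℝ => (Real.sqrt (2 * Real.pi))⁻¹ *
            (|u - m| * hermiteR (n + 2) u * Real.exp (-u ^ 2 / 2)) := by
      funext u
      rw [stdNormalPDF]
      ring
    rw [hrw, MeasureTheory.integral_const_mul, hmain, hs]
    field_simp
  exact ⟨by rw [hermiteCoeff, hstd]; ring, hstd⟩
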